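/- For three agents a,b,c, after the asynchronous call sequence ab;ac;ab agent a is a super expert: for every call sequence τ with ab;ac;ab ∼_a τ, all three agents are experts after τ. -/

import Mathlib

variable {A : Type*}

/-- Effect of one call `c` on a secret relation `S`:
`S ∪ ({(x,y),(y,x)} ∘ S)` where `c = (x,y)`. -/
def gstep (S : Set (A × A)) (c : A × A) : Set (A × A) :=
  S ∪ {p | (p.1 = c.1 ∧ (c.2, p.2) ∈ S) ∨ (p.1 = c.2 ∧ (c.1, p.2) ∈ S)}

/-- `S^σ`: the result of applying the call sequence `σ` to `S`. -/
def applyCalls (S : Set (A × A)) (σ : List (A × A)) : Set (A × A) :=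
  σ.foldl gstep S

/-- `I^σ`: the secret relation generated by `σ` from the identity relation. -/
def secrets (σ : List (A × A)) : Set (A × A) :=
  applyCalls {p | p.1 = p.2} σ

/-- `I^σ_x`: the set of secrets agent `x` knows after `σ`. -/
def secretsOf (σ : List (A × A)) (x : A) : Set A :=
  {z | (x, z) ∈ secrets σ}

/-- The asynchronous epistemic relation `∼ₐ`: the smallest equivalence relation
such that `ε ∼ₐ ε`; if `σ ∼ₐ τ` and `a ∉ {b,c}` then `σ;bc ∼ₐ τ`; and
if `σ ∼ₐ τ` and `I^σ_b = I^τ_b` then `σ;ab ∼ₐ τ;ab` and `σ;ba ∼ₐ τ;ba`. -/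
inductive asyncR (a : A) : List (A × A) → List (A × A) → Prop
  | refl (σ) : asyncR a σ σ
  | symm {σ τ} : asyncR a σ τ → asyncR a τ σ
  | trans {σ τ ρ} : asyncR a σ τ → asyncR a τ ρ → asyncR a σ ρ
  | skip {σ τ} {b c : A} : asyncR a σ τ → a ≠ b → a ≠ c →
      asyncR a (σ ++ [(b, c)]) τ
  | callL {σ τ} {b : A} : asyncR a σ τ → secretsOf σ b = secretsOf τ b →
      asyncR a (σ ++ [(a, b)]) (τ ++ [(a, b)])
  | callR {σ τ} {b : A} : asyncR a σ τ → secretsOf σ b = secretsOf τ b →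
      asyncR a (σ ++ [(b, a)]) (τ ++ [(b, a)])

open Classical in
/-- The ordered list of partners of `a`'s calls in `σ`. -/
noncomputable def atrace (a : A) (σ : List (A × A)) : List A :=
  σ.filterMap (fun p => if p.1 = a then some p.2 else if p.2 = a then some p.1 else none)

lemma atrace_append (a : A) (σ τ : List (A × A)) :
    atrace a (σ ++ τ) = atrace a σ ++ atrace a τ :=
  List.filterMap_append

lemma atrace_skip {a x y : A} (hx : a ≠ x) (hy : a ≠ y) :
    atrace a [(x, y)] = [] := by
  simp [atrace, Ne.symm hx, Ne.symm hy]

lemma atrace_callL (a x : A) : atrace a [(a, x)] = [x] := by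
  simp [atrace]

lemma atrace_callR (a x : A) : atrace a [(x, a)] = [x] := by
  by_cases h : x = a
  · subst h; simp [atrace]
  · simp [atrace, h]

lemma atrace_eq_of_asyncR {a : A} {σ τ : List (A × A)} (h : asyncR a σ τ) :
    atrace a σ = atrace a τ := by
  induction h with
  | refl => rfl
  | symm _ ih => exact ih.symm
  | trans _ _ ih1 ih2 => exact ih1.trans ih2
  | skip _ hx hy ih => rw [atrace_append, atrace_skip hx hy, List.append_nil, ih]
  | callL _ _ ih => rw [atrace_append, atrace_append, ih]
  | callR _ _ ih => rw [atrace_append, atrace_append, ih]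

lemma subset_gstep (S : Set (A × A)) (p : A × A) : S ⊆ gstep S p :=
  Set.subset_union_left

lemma subset_applyCalls (S : Set (A × A)) (σ : List (A × A)) :
    S ⊆ applyCalls S σ := by
  induction σ generalizing S with
  | nil => exact le_refl _
  | cons p σ ih => exact (subset_gstep S p).trans (ih (gstep S p))

lemma mem_secrets_refl (σ : List (A × A)) (x : A) : (x, x) ∈ secrets σ :=
  subset_applyCalls _ σ rfl

lemma secrets_append_single (σ : List (A × A)) (p : A × A) :
    secrets (σ ++ [p]) = gstep (secrets σ) p := by
  simp [secrets, applyCalls, List.foldl_append]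

lemma gstep_left {S : Set (A × A)} {x y z : A} (h : (y, z) ∈ S) :
    (x, z) ∈ gstep S (x, y) :=
  Or.inr (Or.inl ⟨rfl, h⟩)

lemma gstep_right {S : Set (A × A)} {x y z : A} (h : (x, z) ∈ S) :
    (y, z) ∈ gstep S (x, y) :=
  Or.inr (Or.inr ⟨rfl, h⟩)

lemma concat_eq_concat {l m : List A} {x y : A} (h : l ++ [x] = m ++ [y]) :
    l = m ∧ x = y := by
  have h' := List.append_inj' h rfl
  exact ⟨h'.1, by simpa using h'.2⟩

/-- After one `a`-call (with partner `b`), `a` knows `b`'s secret. -/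
lemma trace_one {a b : A} :
    ∀ σ : List (A × A), atrace a σ = [b] → (a, b) ∈ secrets σ := by
  intro σ
  induction σ using List.reverseRecOn with
  | nil => intro h; simp [atrace] at h
  | append_singleton σ p ih =>
    rcases p with ⟨x, y⟩
    intro h
    rw [atrace_append] at h
    rw [secrets_append_single]
    by_cases hx : x = a
    · obtain rfl := hx.symm
      rw [atrace_callL] at h
      obtain ⟨h1, h2⟩ := concat_eq_concat (m := []) (y := b) h
      obtain rfl := h2.symm
      exact gstep_left (mem_secrets_refl σ b)
    · by_cases hy : y = a
      · obtain rfl := hy.symm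
        rw [atrace_callR] at h
        obtain ⟨h1, h2⟩ := concat_eq_concat (m := []) (y := b) h
        obtain rfl := h2.symm
        exact gstep_right (mem_secrets_refl σ b)
      · rw [atrace_skip (fun e => hx e.symm) (fun e => hy e.symm),
          List.append_nil] at h
        exact subset_gstep _ _ (ih h)

/-- After `a` has called `b` then `c`, both `a` and `c` know everything. -/
lemma trace_two {a b c : A} (hcov : ∀ x : A, x = a ∨ x = b ∨ x = c) :
    ∀ σ : List (A × A), atrace a σ = [b, c] →
      (∀ z, (a, z) ∈ secrets σ) ∧ (∀ z, (c, z) ∈ secrets σ) := by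
  intro σ
  induction σ using List.reverseRecOn with
  | nil => intro h; simp [atrace] at h
  | append_singleton σ p ih =>
    rcases p with ⟨x, y⟩
    intro h
    rw [atrace_append] at h
    rw [secrets_append_single]
    by_cases hx : x = a
    · obtain rfl := hx.symm
      rw [atrace_callL] at h
      obtain ⟨h1, h2⟩ := concat_eq_concat (m := [b]) (y := c) h
      obtain rfl := h2.symm
      have hab : (a, b) ∈ secrets σ := trace_one σ h1
      have key : ∀ z, (a, z) ∈ gstep (secrets σ) (a, c) := by
        intro z
        rcases hcov z with rfl | rfl | rfl
        · exact subset_gstep _ _ (mem_secrets_refl σ z)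
        · exact subset_gstep _ _ hab
        · exact gstep_left (mem_secrets_refl σ z)
      refine ⟨key, fun z => ?_⟩
      rcases hcov z with rfl | rfl | rfl
      · exact gstep_right (mem_secrets_refl σ z)
      · exact gstep_right hab
      · exact subset_gstep _ _ (mem_secrets_refl σ z)
    · by_cases hy : y = a
      · obtain rfl := hy.symm
        rw [atrace_callR] at h
        obtain ⟨h1, h2⟩ := concat_eq_concat (m := [b]) (y := c) h
        obtain rfl := h2.symm
        have hab : (a, b) ∈ secrets σ := trace_one σ h1
        have key : ∀ z, (a, z) ∈ gstep (secrets σ) (c, a) := by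
          intro z
          rcases hcov z with rfl | rfl | rfl
          · exact subset_gstep _ _ (mem_secrets_refl σ z)
          · exact subset_gstep _ _ hab
          · exact gstep_right (mem_secrets_refl σ z)
        refine ⟨key, fun z => ?_⟩
        rcases hcov z with rfl | rfl | rfl
        · exact gstep_left (mem_secrets_refl σ z)
        · exact gstep_left hab
        · exact subset_gstep _ _ (mem_secrets_refl σ z)
      · rw [atrace_skip (fun e => hx e.symm) (fun e => hy e.symm),
          List.append_nil] at h
        obtain ⟨ha, hc⟩ := ih h
        exact ⟨fun z => subset_gstep _ _ (ha z),
               fun z => subset_gstep _ _ (hc z)⟩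

/-- After `a` has called `b`, `c`, `b`, everyone knows everything. -/
lemma trace_three {a b c : A} (hcov : ∀ x : A, x = a ∨ x = b ∨ x = c) :
    ∀ σ : List (A × A), atrace a σ = [b, c, b] →
      secrets σ = (Set.univ : Set (A × A)) := by
  intro σ
  induction σ using List.reverseRecOn with
  | nil => intro h; simp [atrace] at h
  | append_singleton σ p ih =>
    rcases p with ⟨x, y⟩
    intro h
    rw [atrace_append] at h
    rw [secrets_append_single]
    by_cases hx : x = a
    · obtain rfl := hx.symm
      rw [atrace_callL] at h
      obtain ⟨h1, h2⟩ := concat_eq_concat (m := [b, c]) (y := b) h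
      obtain rfl := h2.symm
      obtain ⟨ha, hc⟩ := trace_two hcov σ h1
      ext ⟨w, z⟩
      simp only [Set.mem_univ, iff_true]
      rcases hcov w with rfl | rfl | rfl
      · exact subset_gstep _ _ (ha z)
      · exact gstep_right (ha z)
      · exact subset_gstep _ _ (hc z)
    · by_cases hy : y = a
      · obtain rfl := hy.symm
        rw [atrace_callR] at h
        obtain ⟨h1, h2⟩ := concat_eq_concat (m := [b, c]) (y := b) h
        obtain rfl := h2.symm
        obtain ⟨ha, hc⟩ := trace_two hcov σ h1
        ext ⟨w, z⟩
        simp only [Set.mem_univ, iff_true]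
        rcases hcov w with rfl | rfl | rfl
        · exact subset_gstep _ _ (ha z)
        · exact gstep_left (ha z)
        · exact subset_gstep _ _ (hc z)
      · rw [atrace_skip (fun e => hx e.symm) (fun e => hy e.symm),
          List.append_nil] at h
        rw [ih h]
        exact Set.eq_univ_of_univ_subset (subset_gstep _ _)

/-- For three agents, after `ab;ac;ab` agent `a` is a super expert:
all agents are experts after every sequence `a` cannot distinguish from it. -/
theorem three_agents_super_expert (a b c : A)
    (hab : a ≠ b) (hac : a ≠ c) (hbc : b ≠ c)
    (hcov : ∀ x : A, x = a ∨ x = b ∨ x = c) :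
    ∀ τ : List (A × A), asyncR a [(a, b), (a, c), (a, b)] τ →
      secrets τ = (Set.univ : Set (A × A)) := by
  intro τ hτ
  have ht : atrace a τ = [b, c, b] := by
    rw [← atrace_eq_of_asyncR hτ]
    simp [atrace]
  exact trace_three hcov τ ht
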